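/- Let S be a symmetric m×m matrix and q₁ a unit vector with rank[q₁, Sq₁, …, S^{m−1}q₁] = m. Then the Lanczos algorithm starting from q₁ does not break down and produces an orthogonal matrix Q = [q₁, …, q_m] such that QᵗSQ is symmetric tridiagonal with strictly positive entries on the sub- and super-diagonal. -/

import Mathlib

open Matrix Submodule Set InnerProductSpace
open scoped RealInnerProductSpace

/-- for a symmetric matrix S and a unit vector q₁ whose Krylov
matrix has full rank, the Lanczos algorithm does not break down and produces an
orthogonal matrix Q with first column q₁ such that QᵗSQ is symmetric tridiagonal
with strictly positive sub- and super-diagonal entries. -/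
theorem mrmt_stmt16 {m : ℕ} (S : Matrix (Fin (m + 1)) (Fin (m + 1)) ℝ)
    (hS : S.IsSymm)
    (q1 : Fin (m + 1) → ℝ) (hq1 : ∑ i, q1 i ^ 2 = 1)
    (hk : (Matrix.of fun i (k : Fin (m + 1)) => ((S ^ (k : ℕ)) *ᵥ q1) i).rank = m + 1) :
    ∃ Q : Matrix (Fin (m + 1)) (Fin (m + 1)) ℝ,
      Qᵀ * Q = 1 ∧
      (∀ i, Q i 0 = q1 i) ∧
      (Qᵀ * S * Q).IsSymm ∧
      (∀ i j : Fin (m + 1), ((i : ℕ) + 1 < (j : ℕ) ∨ (j : ℕ) + 1 < (i : ℕ)) →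
        (Qᵀ * S * Q) i j = 0) ∧
      (∀ i j : Fin (m + 1), (j : ℕ) = (i : ℕ) + 1 →
        0 < (Qᵀ * S * Q) i j ∧ 0 < (Qᵀ * S * Q) j i) := by
  classical
  haveI : WellFoundedLT (Fin (m+1)) := inferInstance
  have hli : LinearIndependent ℝ
      (fun k : Fin (m+1) => (WithLp.toLp 2 ((S ^ (k : ℕ)) *ᵥ q1) : EuclideanSpace ℝ (Fin (m+1)))) := by
    set K := (Matrix.of fun i (k : Fin (m + 1)) => ((S ^ (k : ℕ)) *ᵥ q1) i) with hK
    have hrange : LinearMap.range K.mulVecLin = ⊤ := by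
      apply Submodule.eq_top_of_finrank_eq
      simpa [Matrix.rank] using hk
    have hinj : Function.Injective K.mulVecLin := by
      rw [← LinearMap.ker_eq_bot]
      rw [LinearMap.ker_eq_bot_iff_range_eq_top_of_finrank_eq_finrank (by simp)]
      exact hrange
    rw [Fintype.linearIndependent_iff]
    intro c hc k
    have : K.mulVecLin c = K.mulVecLin 0 := by
      simp only [map_zero]
      rw [Matrix.mulVecLin_apply]
      ext i
      have := congrArg (fun x : EuclideanSpace ℝ (Fin (m+1)) => x i) hc
      simpa [Matrix.mulVec, dotProduct, hK, Finset.sum_apply, mul_comm] using this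
    exact congrFun (hinj this) k
  set v : Fin (m+1) → EuclideanSpace ℝ (Fin (m+1)) :=
    fun k => WithLp.toLp 2 ((S ^ (k : ℕ)) *ᵥ q1) with hv
  set g : Fin (m+1) → EuclideanSpace ℝ (Fin (m+1)) := gramSchmidt ℝ v with hg
  set q : Fin (m+1) → EuclideanSpace ℝ (Fin (m+1)) := gramSchmidtNormed ℝ v with hq
  have horth : Orthonormal ℝ q := gramSchmidtNormed_orthonormal hli
  have hgne : ∀ n, g n ≠ 0 := fun n => gramSchmidt_ne_zero n hli
  have hqdef : ∀ n, q n = ‖g n‖⁻¹ • g n := fun n => by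
    simp [hq, gramSchmidtNormed, hg]
  -- S maps the Krylov vectors up one step
  have hSv : ∀ (l t : Fin (m+1)) (hlt : l < t),
      (WithLp.toLp 2 (S *ᵥ (v l).ofLp) : EuclideanSpace ℝ (Fin (m+1))) = v ⟨(l : ℕ) + 1, by
        have h1 : (l:ℕ) < (t:ℕ) := hlt
        have h2 := t.isLt
        omega⟩ := by
    intro l t hlt
    show WithLp.toLp 2 (S *ᵥ ((S ^ (l : ℕ)) *ᵥ q1)) = WithLp.toLp 2 ((S ^ ((l : ℕ) + 1)) *ᵥ q1)
    rw [Matrix.mulVec_mulVec, ← pow_succ']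
  -- S maps span of early Krylov vectors into span of slightly later ones
  have hB : ∀ (t : Fin (m+1)), ∀ x ∈ span ℝ (v '' Set.Iio t),
      (WithLp.toLp 2 (S *ᵥ x.ofLp) : EuclideanSpace ℝ (Fin (m+1))) ∈ span ℝ (v '' Set.Iic t) := by
    intro t x hx
    induction hx using Submodule.span_induction with
    | mem y hy =>
      obtain ⟨l, hl, rfl⟩ := hy
      rw [hSv l t hl]
      exact subset_span ⟨⟨(l : ℕ) + 1, by
        have h1 : (l:ℕ) < (t:ℕ) := hl
        have h2 := t.isLt
        omega⟩, by
        simp only [Set.mem_Iic, Fin.le_def]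
        exact hl, rfl⟩
    | zero => simpa using zero_mem _
    | add a b _ _ ha hb => rw [WithLp.ofLp_add, Matrix.mulVec_add, WithLp.toLp_add]; exact add_mem ha hb
    | smul c a _ ha => rw [WithLp.ofLp_smul, Matrix.mulVec_smul, WithLp.toLp_smul]; exact smul_mem _ _ ha
  -- orthogonality of q i to earlier Krylov vectors and spans
  have hqv : ∀ (i l : Fin (m+1)), l < i → ⟪q i, v l⟫ = 0 := by
    intro i l hli'
    rw [hqdef, inner_smul_left]
    have := gramSchmidt_inv_triangular ℝ v hli'
    simp [hg] at this ⊢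
    right; exact this
  have hOrthIio : ∀ (i : Fin (m+1)), ∀ x ∈ span ℝ (v '' Set.Iio i), ⟪q i, x⟫ = 0 := by
    intro i x hx
    induction hx using Submodule.span_induction with
    | mem y hy => obtain ⟨l, hl, rfl⟩ := hy; exact hqv i l hl
    | zero => simp
    | add a b _ _ ha hb => simp [inner_add_right, ha, hb]
    | smul c a _ ha => simp [inner_smul_right, ha]
  have hOrthIic : ∀ (i t : Fin (m+1)), t < i → ∀ x ∈ span ℝ (v '' Set.Iic t), ⟪q i, x⟫ = 0 := by
    intro i t hti x hx
    refine hOrthIio i x (span_mono (Set.image_mono (f := v) ?_) hx)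
    intro a ha
    exact lt_of_le_of_lt ha hti
  have hqspan : ∀ j, q j ∈ span ℝ (v '' Set.Iic j) := by
    intro j
    rw [hqdef]
    exact smul_mem _ _ (gramSchmidt_mem_span ℝ v le_rfl)
  have hvg : ∀ n, v n - g n ∈ span ℝ (v '' Set.Iio n) := by
    intro n
    rw [← span_gramSchmidt_Iio ℝ v n]
    have h : v n - g n = ∑ i ∈ Finset.Iio n,
        ((ℝ ∙ g i).starProjection (v n) : EuclideanSpace ℝ (Fin (m+1))) :=
      sub_eq_iff_eq_add'.mpr (gramSchmidt_def' ℝ v n)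
    rw [h]
    exact Submodule.sum_mem _ fun k hk =>
      (Submodule.span_singleton_le_iff_mem _ _).2
        (subset_span (Set.mem_image_of_mem g (show k ∈ Set.Iio n from Finset.mem_Iio.1 hk)))
        (Submodule.starProjection_apply_mem (ℝ ∙ g k) (v n))
  set Q : Matrix (Fin (m+1)) (Fin (m+1)) ℝ := Matrix.of fun i j => q j i with hQ
  have hEntry : ∀ (i j : Fin (m+1)),
      (Qᵀ * S * Q) i j = ⟪q i, (WithLp.toLp 2 (S *ᵥ (q j).ofLp) : EuclideanSpace ℝ (Fin (m+1)))⟫ := by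
    intro i j
    simp only [hQ, Matrix.mul_apply, Matrix.transpose_apply, Matrix.of_apply,
      PiLp.inner_apply, RCLike.inner_apply, conj_trivial, Matrix.mulVec,
      dotProduct, Finset.mul_sum, Finset.sum_mul]
    rw [Finset.sum_comm]
    congr 1; ext a; congr 1; ext b; ring
  have hsymQ : (Qᵀ * S * Q).IsSymm := by
    rw [Matrix.IsSymm, Matrix.transpose_mul, Matrix.transpose_mul,
      Matrix.transpose_transpose, hS, Matrix.mul_assoc]
  have hzero : ∀ (i j : Fin (m+1)), (j:ℕ) + 1 < (i:ℕ) →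
      ⟪q i, (WithLp.toLp 2 (S *ᵥ (q j).ofLp) : EuclideanSpace ℝ (Fin (m+1)))⟫ = 0 := by
    intro i j hij
    have hti : ((j:ℕ)+1) < m + 1 := lt_trans hij i.isLt
    have hIic : Set.Iic j = Set.Iio (⟨(j:ℕ)+1, hti⟩ : Fin (m+1)) := by
      ext x
      constructor
      · intro hx
        exact Set.mem_Iio.mpr (Fin.lt_def.mpr (Nat.lt_succ_of_le (Fin.le_def.mp (Set.mem_Iic.mp hx))))
      · intro hx
        exact Set.mem_Iic.mpr (Fin.le_def.mpr (Nat.lt_succ_iff.mp (Fin.lt_def.mp (Set.mem_Iio.mp hx))))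
    refine hOrthIic i ⟨(j:ℕ)+1, hti⟩ (Fin.lt_def.mpr hij) _ (hB _ _ ?_)
    rw [← hIic]; exact hqspan j
  have hpos : ∀ (i j : Fin (m+1)), (j:ℕ) = (i:ℕ) + 1 →
      ⟪q j, (WithLp.toLp 2 (S *ᵥ (q i).ofLp) : EuclideanSpace ℝ (Fin (m+1)))⟫ = ‖g i‖⁻¹ * ‖g j‖ := by
    intro i j hij
    have hij' : i < j := Fin.lt_def.mpr (by omega)
    obtain ⟨w, hw⟩ : ∃ w : EuclideanSpace ℝ (Fin (m+1)), w = WithLp.toLp 2 (S *ᵥ (v i - g i).ofLp) := ⟨_, rfl⟩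
    have h1 : v j = (WithLp.toLp 2 (S *ᵥ (v i).ofLp) : EuclideanSpace ℝ (Fin (m+1))) := by
      show WithLp.toLp 2 ((S ^ (j:ℕ)) *ᵥ q1) = WithLp.toLp 2 (S *ᵥ ((S ^ (i:ℕ)) *ᵥ q1))
      rw [Matrix.mulVec_mulVec, ← pow_succ', hij]
    have hSgi : (WithLp.toLp 2 (S *ᵥ (g i).ofLp) : EuclideanSpace ℝ (Fin (m+1))) = v j - w := by
      rw [hw, h1, WithLp.ofLp_sub, Matrix.mulVec_sub, WithLp.toLp_sub, sub_sub_cancel]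
    have e1 : ⟪q j, w⟫ = 0 := by
      rw [hw]
      exact hOrthIic j i hij' _ (hB i _ (hvg i))
    have e2 : ⟪q j, v j⟫ = ‖g j‖ := by
      have h3 : v j = g j + (v j - g j) := by abel
      have h4 : ⟪q j, v j - g j⟫ = 0 := hOrthIio j _ (hvg j)
      have h5 : ⟪q j, g j⟫ = ‖g j‖ := by
        rw [hqdef, real_inner_smul_left, real_inner_self_eq_norm_mul_norm,
          ← mul_assoc, inv_mul_cancel₀ (norm_ne_zero_iff.mpr (hgne j)), one_mul]
      calc ⟪q j, v j⟫ = ⟪q j, g j + (v j - g j)⟫ := by rw [← h3]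
        _ = ‖g j‖ := by rw [inner_add_right, h4, h5, add_zero]
    calc ⟪q j, (WithLp.toLp 2 (S *ᵥ (q i).ofLp) : EuclideanSpace ℝ (Fin (m+1)))⟫
        = ‖g i‖⁻¹ * ⟪q j, (WithLp.toLp 2 (S *ᵥ (g i).ofLp) : EuclideanSpace ℝ (Fin (m+1)))⟫ := by
          rw [hqdef i, WithLp.ofLp_smul, Matrix.mulVec_smul, WithLp.toLp_smul, real_inner_smul_right]
      _ = ‖g i‖⁻¹ * ‖g j‖ := by rw [hSgi, inner_sub_right, e1, sub_zero, e2]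
  refine ⟨Q, ?_, ?_, hsymQ, ?_, ?_⟩
  · ext i j
    have h : (Qᵀ * Q) i j = ⟪q i, q j⟫ := by
      simp only [hQ, Matrix.mul_apply, Matrix.transpose_apply, Matrix.of_apply,
        PiLp.inner_apply, RCLike.inner_apply, conj_trivial]
      exact Finset.sum_congr rfl fun _ _ => mul_comm _ _
    rw [h, orthonormal_iff_ite.mp horth i j, Matrix.one_apply]
  · intro i
    show q 0 i = q1 i
    have h0 : g 0 = v 0 := by
      have hb : ((0 : Fin (m+1))) = ⊥ := rfl
      rw [hg, hb, gramSchmidt_bot]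
    have hv0 : v 0 = (WithLp.toLp 2 q1 : EuclideanSpace ℝ (Fin (m+1))) := by
      show WithLp.toLp 2 ((S ^ ((0 : Fin (m+1)) : ℕ)) *ᵥ q1) = WithLp.toLp 2 q1
      simp
    have hn : ‖v 0‖ = 1 := by
      rw [hv0, EuclideanSpace.norm_eq]
      simp only [Real.norm_eq_abs, sq_abs, PiLp.toLp_apply]
      rw [hq1]
      exact Real.sqrt_one
    rw [hqdef, h0, hn]
    simp [hv0]
  · intro i j hij
    rcases hij with h | h
    · rw [← hsymQ.apply i j, hEntry]
      exact hzero j i h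
    · rw [hEntry]
      exact hzero i j h
  · intro i j hij
    have hposval : 0 < ‖g i‖⁻¹ * ‖g j‖ :=
      mul_pos (inv_pos.mpr (norm_pos_iff.mpr (hgne i))) (norm_pos_iff.mpr (hgne j))
    constructor
    · rw [← hsymQ.apply i j, hEntry, hpos i j hij]
      exact hposval
    · rw [hEntry, hpos i j hij]
      exact hposval
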